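/- arXiv:1802.04050 — 4 statements merged into one kernel-verified Lean document; each statement's English description precedes it below -/
import Mathlib

section
/- In the normal hierarchical model with $\sigma^2 = \tau^2 = 1$ (so $\omega = 1/2$), the Empirical Bayes interval $(1-\omega)X_1 + \omega\overline{X} \pm z_{\alpha/2}\sqrt{1-\omega}$ has joint coverage probability $P(\mu_1 \in C_\alpha(X)) = 2\Phi\left(z_{\alpha/2}\sqrt{\frac{1-\omega}{1-\omega(n-1)/n}}\right) - 1$, which is strictly less than $1-\alpha$ for every finite $n \ge 2$ and converges to $1-\alpha$ as $n \to \infty$. -/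
open MeasureTheory ProbabilityTheory

lemma gauss_singleton {v : NNReal} (hv : v ≠ 0) (m x : ℝ) : gaussianReal m v {x} = 0 :=
  gaussianReal_absolutelyContinuous m hv (measure_singleton x)

lemma gauss_cdf_continuousAt {v : NNReal} (hv : v ≠ 0) (m x : ℝ) :
    ContinuousAt (cdf (gaussianReal m v)) x := by
  set f := cdf (gaussianReal m v) with hf
  rw [f.mono.continuousAt_iff_leftLim_eq_rightLim, f.rightLim_eq]
  have h1 : f.measure {x} = ENNReal.ofReal (f x - Function.leftLim f x) :=
    f.measure_singleton x
  rw [hf, measure_cdf, gauss_singleton hv] at h1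
  have h2 : f x - Function.leftLim f x ≤ 0 := by
    by_contra h
    push_neg at h
    rw [eq_comm, ENNReal.ofReal_eq_zero] at h1
    linarith
  have h3 : Function.leftLim f x ≤ f x := f.mono.leftLim_le le_rfl
  linarith

lemma gauss_cdf_strictMono {v : NNReal} (hv : v ≠ 0) (m : ℝ) :
    StrictMono (cdf (gaussianReal m v)) := by
  intro a b hab
  set f := cdf (gaussianReal m v) with hf
  have h1 : f.measure (Set.Ioc a b) = ENNReal.ofReal (f b - f a) := f.measure_Ioc a b
  rw [hf, measure_cdf, gaussianReal_apply m hv] at h1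
  have h2 : 0 < ∫⁻ x in Set.Ioc a b, gaussianPDF m v x := by
    rw [setLIntegral_pos_iff (measurable_gaussianPDF m v)]
    have hsupp : Function.support (gaussianPDF m v) = Set.univ := by
      ext x; simp [Function.mem_support, (gaussianPDF_pos m hv x).ne']
    rw [hsupp, Set.univ_inter, Real.volume_Ioc]
    exact ENNReal.ofReal_pos.2 (by linarith)
  rw [h1] at h2
  have := ENNReal.ofReal_pos.mp h2
  linarith

lemma gauss_map_neg : (gaussianReal 0 1).map (fun x : ℝ => -x) = gaussianReal 0 1 := by
  have h := gaussianReal_map_const_mul (μ := 0) (v := 1) (-1)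
  have he : (fun x : ℝ => -x) = ((-1 : ℝ) * ·) := by funext x; ring
  rw [he, h]
  norm_num

lemma gauss_cdf_neg (x : ℝ) :
    cdf (gaussianReal 0 1) (-x) = 1 - cdf (gaussianReal 0 1) x := by
  haveI : NullSingletonClass (gaussianReal 0 1 : Measure ℝ) := ⟨gauss_singleton one_ne_zero 0⟩
  have hIic : gaussianReal 0 1 (Set.Iic (-x)) = gaussianReal 0 1 (Set.Ici x) := by
    conv_lhs => rw [← gauss_map_neg]
    rw [Measure.map_apply measurable_neg measurableSet_Iic]
    congr 1
    ext y
    simp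
  have h2 : gaussianReal 0 1 (Set.Ici x) = 1 - gaussianReal 0 1 (Set.Iio x) := by
    rw [← Set.compl_Iio, measure_compl measurableSet_Iio (measure_ne_top _ _), measure_univ]
  have h3 : gaussianReal 0 1 (Set.Iio x) = gaussianReal 0 1 (Set.Iic x) :=
    measure_congr Iio_ae_eq_Iic
  rw [cdf_eq_real, cdf_eq_real, measureReal_def, measureReal_def, hIic, h2, h3,
    ENNReal.toReal_sub_of_le prob_le_one (by simp)]
  simp

lemma gauss_cdf_scale {v : NNReal} (hv : v ≠ 0) (x : ℝ) :
    cdf (gaussianReal 0 v) x = cdf (gaussianReal 0 1) (x / Real.sqrt v) := by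
  have hvpos : (0:ℝ) < (v:ℝ) := by exact_mod_cast hv.bot_lt
  have hs : (0:ℝ) < Real.sqrt v := Real.sqrt_pos.2 hvpos
  have hmap : (gaussianReal 0 1).map ((Real.sqrt (v:ℝ)) * ·) = gaussianReal 0 v := by
    rw [gaussianReal_map_const_mul]
    norm_num
  rw [cdf_eq_real, cdf_eq_real, measureReal_def, measureReal_def, ← hmap,
    Measure.map_apply (measurable_const_mul _) measurableSet_Iic]
  congr 2
  ext y
  simp only [Set.mem_preimage, Set.mem_Iic]
  rw [mul_comm]
  exact (le_div_iff₀ hs).symm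

lemma gauss_abs_le {v : NNReal} (hv : v ≠ 0) (c : ℝ) :
    gaussianReal 0 v {y : ℝ | |y| ≤ c}
      = ENNReal.ofReal (2 * cdf (gaussianReal 0 1) (c / Real.sqrt v) - 1) := by
  haveI : NullSingletonClass (gaussianReal 0 v : Measure ℝ) := ⟨gauss_singleton hv 0⟩
  have hset : {y : ℝ | |y| ≤ c} = Set.Icc (-c) c := by ext y; simp [abs_le]
  rw [hset, ← measure_congr Ioc_ae_eq_Icc]
  have h := (cdf (gaussianReal 0 v)).measure_Ioc (-c) c
  rw [measure_cdf] at h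
  rw [h, gauss_cdf_scale hv, gauss_cdf_scale hv, neg_div, gauss_cdf_neg]
  congr 1
  ring

/-- In the normal hierarchical model with `σ² = τ² = 1` (so `w = 1/2`), the Empirical Bayes
interval `(1-w)X₁ + w X̄ ± z√(1-w)` has joint coverage
`2Φ(z√((1-w)/(1-w(n-1)/n))) - 1`, which is strictly below `1-α` for every finite `n ≥ 2`
and converges to `1-α` as `n → ∞`. The pivotal fact
`(1-w)X₁ + w X̄ - μ₁ ~ N(0, 1 - w(n-1)/n)` is encoded via the pivot `V n`. -/
theorem stmt_3 (α : ℝ) (hα : α ∈ Set.Ioo (0 : ℝ) 1)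
    (z : ℝ) (hz : cdf (gaussianReal 0 1) z = 1 - α / 2)
    (Ω : ℕ → Type*) (mΩ : ∀ n, MeasurableSpace (Ω n))
    (P : ∀ n, Measure (Ω n)) (hP : ∀ n, IsProbabilityMeasure (P n))
    (V : ∀ n, Ω n → ℝ)
    (hV : ∀ n, 2 ≤ n → Measure.map (V n) (P n) =
      gaussianReal 0 ((1 - (1 / 2 : ℝ) * ((n : ℝ) - 1) / n).toNNReal))
    (Φ : ℝ → ℝ) (hΦ : ∀ x, Φ x = cdf (gaussianReal 0 1) x) :
    (∀ n, 2 ≤ n →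
      (P n) {ω | |V n ω| ≤ z * Real.sqrt (1 - 1 / 2)} =
        ENNReal.ofReal
          (2 * Φ (z * Real.sqrt ((1 - 1 / 2) / (1 - (1 / 2 : ℝ) * ((n : ℝ) - 1) / n))) - 1) ∧
      2 * Φ (z * Real.sqrt ((1 - 1 / 2) / (1 - (1 / 2 : ℝ) * ((n : ℝ) - 1) / n))) - 1
        < 1 - α) ∧
    Filter.Tendsto
      (fun n : ℕ =>
        2 * Φ (z * Real.sqrt ((1 - 1 / 2) / (1 - (1 / 2 : ℝ) * ((n : ℝ) - 1) / n))) - 1)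
      Filter.atTop (nhds (1 - α)) := by
  have hΦ0 : cdf (gaussianReal 0 1) 0 = 1 / 2 := by
    have h := gauss_cdf_neg 0
    rw [neg_zero] at h
    linarith
  have hzpos : 0 < z := by
    by_contra h
    push_neg at h
    have hm := (cdf (gaussianReal 0 1)).mono h
    rw [hz, hΦ0] at hm
    have := hα.2
    linarith
  constructor
  · intro n hn
    have hn' : (2:ℝ) ≤ (n:ℝ) := by exact_mod_cast hn
    have hnpos : (0:ℝ) < (n:ℝ) := by linarith
    set r : ℝ := 1 - (1/2 : ℝ) * ((n:ℝ) - 1) / n with hr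
    clear_value r
    have h12 : (1/2:ℝ) < r := by
      have hlt : (1/2:ℝ) * ((n:ℝ) - 1) / n < 1/2 := by
        rw [div_lt_iff₀ hnpos]; nlinarith
      rw [hr]; linarith
    have hrpos : (0:ℝ) < r := by linarith
    set v : NNReal := r.toNNReal with hvdef
    clear_value v
    have hvne : v ≠ 0 := by rw [hvdef]; exact (Real.toNNReal_pos.2 hrpos).ne'
    have hcoe : ((v:ℝ)) = r := by rw [hvdef]; exact Real.coe_toNNReal _ hrpos.le
    have hVmeas : AEMeasurable (V n) (P n) := by
      apply aemeasurable_of_map_neZero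
      rw [hV n hn]
      infer_instance
    have hsetpre : {ω | |V n ω| ≤ z * Real.sqrt (1 - 1/2)}
        = V n ⁻¹' {y : ℝ | |y| ≤ z * Real.sqrt (1 - 1/2)} := rfl
    have hms : MeasurableSet {y : ℝ | |y| ≤ z * Real.sqrt (1 - 1/2)} := by
      have : {y : ℝ | |y| ≤ z * Real.sqrt (1 - 1/2)}
          = Set.Icc (-(z * Real.sqrt (1 - 1/2))) (z * Real.sqrt (1 - 1/2)) := by
        ext y; simp [abs_le]
      rw [this]; exact measurableSet_Icc
    have harg : (z * Real.sqrt (1 - 1/2)) / Real.sqrt ((v:ℝ))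
        = z * Real.sqrt ((1 - 1/2) / r) := by
      rw [hcoe, Real.sqrt_div (by norm_num : (0:ℝ) ≤ 1 - 1/2), mul_div_assoc]
    have hkey : (P n) {ω | |V n ω| ≤ z * Real.sqrt (1 - 1/2)}
        = ENNReal.ofReal (2 * cdf (gaussianReal 0 1) (z * Real.sqrt ((1 - 1/2) / r)) - 1) := by
      rw [hsetpre, ← Measure.map_apply_of_aemeasurable hVmeas hms, hV n hn, ← hr, ← hvdef,
        gauss_abs_le hvne, harg]
    have hs1 : Real.sqrt ((1 - 1/2) / r) < 1 := by
      rw [Real.sqrt_lt' one_pos, one_pow, div_lt_one hrpos]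
      linarith
    have hzs : z * Real.sqrt ((1 - 1/2) / r) < z := by
      nlinarith [Real.sqrt_nonneg ((1 - 1/2) / r)]
    have hmono := gauss_cdf_strictMono one_ne_zero 0 hzs
    rw [hz] at hmono
    constructor
    · rw [hkey, hΦ]
    · rw [hΦ]
      linarith
  · have ht : Filter.Tendsto (fun n : ℕ => 1 - (1/2:ℝ) * ((n:ℝ) - 1) / n)
        Filter.atTop (nhds (1/2)) := by
      have h0 : Filter.Tendsto (fun n : ℕ => 1/2 + (1/2) * (1/(n:ℝ)))
          Filter.atTop (nhds (1/2)) := by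
        have := tendsto_one_div_atTop_nhds_zero_nat.const_mul (1/2 : ℝ)
        have h2 := (tendsto_const_nhds : Filter.Tendsto (fun _ : ℕ => (1/2:ℝ))
          Filter.atTop (nhds (1/2))).add this
        simpa using h2
      apply h0.congr'
      filter_upwards [Filter.eventually_ge_atTop 1] with n hn
      have hnpos : (0:ℝ) < (n:ℝ) := by exact_mod_cast hn
      field_simp
      ring
    have hcont : ContinuousAt
        (fun rr : ℝ => 2 * Φ (z * Real.sqrt ((1 - 1/2) / rr)) - 1) (1/2) := by
      simp only [hΦ]
      apply ContinuousAt.sub _ continuousAt_const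
      apply ContinuousAt.mul continuousAt_const
      have hinner : ContinuousAt (fun rr : ℝ => z * Real.sqrt ((1 - 1/2) / rr)) (1/2) := by
        apply ContinuousAt.mul continuousAt_const
        apply Real.continuous_sqrt.continuousAt.comp
        exact ContinuousAt.div continuousAt_const continuousAt_id (by norm_num)
      exact ((gauss_cdf_continuousAt one_ne_zero 0 _).comp hinner : _)
    have key := hcont.tendsto.comp ht
    have hval : 2 * Φ (z * Real.sqrt ((1 - 1/2) / ((1:ℝ)/2))) - 1 = 1 - α := by
      have h1 : ((1:ℝ) - 1/2) / ((1:ℝ)/2) = 1 := by norm_num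
      rw [h1, Real.sqrt_one, mul_one, hΦ, hz]
      ring
    rw [hval] at key
    exact key
end

section
/- Suppose, conditionally on $W_H = h$, a random variable $W$ satisfies $P(Q_h(W) \ge 1-\alpha) \le \alpha$ where $Q_h(w) = P_{\mathcal{S}_h}(w \notin \mathcal{S}_h)$, and for each realized data point the event $\{\eta \in C_\alpha(X)\}$ equals $\{Q_h(W_b) \le 1-\alpha\}$ where $W_b$ has the law of $W$ given $W_H = h$. Then $P(\eta \in C_\alpha(X) \mid H(X) = h) \ge 1 - \alpha$ for every $h$ and every mixing distribution $\pi^*$ on the unknown parameter $\theta^*$. -/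
open MeasureTheory
open scoped ENNReal

/-- Abstraction of Theorem 1 (conditional validity). Fix `h` and let `μ θ` be the conditional
law (given `W_H = h`) of the auxiliary variable `W_b(θ*)` for each value `θ*` of the unknown
parameter. If the predictive random set is valid uniformly in `θ*`, i.e.
`P(Q_h(W) ≥ 1-α) ≤ α` under each `μ θ`, and the coverage event `{η ∈ C_α(X)}` equals
`{Q_h(W_b) ≤ 1-α}`, then the conditional coverage is at least `1-α` for every mixing
distribution `π*` on `θ*`. -/
theorem stmt_9 {Θ : Type*} [MeasurableSpace Θ]
    (μ : Θ → Measure ℝ) (hprob : ∀ θ, IsProbabilityMeasure (μ θ))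
    (hmeas : Measurable μ)
    (Q : ℝ → ℝ) (hQ : Measurable Q) (α : ℝ) (hα : α ∈ Set.Icc (0 : ℝ) 1)
    (hvalid : ∀ θ, (μ θ) {w : ℝ | 1 - α ≤ Q w} ≤ ENNReal.ofReal α)
    (A : Set ℝ) (hA : A = {w : ℝ | Q w ≤ 1 - α})
    (π : Measure Θ) [IsProbabilityMeasure π] :
    1 - ENNReal.ofReal α ≤ (π.bind μ) A := by
  have hAmeas : MeasurableSet A := by
    rw [hA]
    exact hQ measurableSet_Iic
  have hθ : ∀ θ, 1 - ENNReal.ofReal α ≤ μ θ A := by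
    intro θ
    have hcomp : Aᶜ ⊆ {w : ℝ | 1 - α ≤ Q w} := by
      rw [hA]
      intro w hw
      simp only [Set.mem_compl_iff, Set.mem_setOf_eq, not_le] at hw
      exact le_of_lt hw
    have h1 : μ θ Aᶜ ≤ ENNReal.ofReal α :=
      le_trans (measure_mono hcomp) (hvalid θ)
    have h2 : (1 : ℝ≥0∞) ≤ μ θ A + ENNReal.ofReal α := by
      calc (1 : ℝ≥0∞) = μ θ Set.univ := (measure_univ (μ := μ θ)).symm
        _ ≤ μ θ A + μ θ Aᶜ := by
            rw [← Set.union_compl_self A]; exact measure_union_le _ _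
        _ ≤ μ θ A + ENNReal.ofReal α := add_le_add le_rfl h1
    exact tsub_le_iff_right.mpr h2
  rw [Measure.bind_apply hAmeas hmeas.aemeasurable]
  calc 1 - ENNReal.ofReal α
      = ∫⁻ _, (1 - ENNReal.ofReal α) ∂π := by
        simp [lintegral_const]
    _ ≤ ∫⁻ θ, μ θ A ∂π := lintegral_mono fun θ => hθ θ
end

section
/- Let $(U, e_1)$ be bivariate normal with mean zero, unit variances, and correlation $\rho$, independent of $M^2 \sim \chi^2_{n-2}/(n-2)$. Set $W_H = U/M$ and $W_e = e_1/M$. Then conditional on $W_H = h$, the distribution of $M^2$ is $\frac{2}{h^2+n-2}\mathsf{Gamma}(\frac{n-1}{2})$, i.e., $M^2 \mid W_H = h$ has density proportional to $t^{(n-1)/2 - 1}e^{-(h^2+n-2)t/2}$ on $(0,\infty)$. -/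
open MeasureTheory ProbabilityTheory Real
open scoped ENNReal

noncomputable def gammaKernelAux (a : ℝ) (r : ℝ → ℝ) (hr : Measurable r) : Kernel ℝ ℝ :=
  ⟨fun h => gammaMeasure a (r h), by
    apply Measure.measurable_of_measurable_coe
    intro s hs
    simp only [gammaMeasure, withDensity_apply _ hs]
    apply Measurable.lintegral_prod_right (f := fun h x => gammaPDF a (r h) x)
    unfold Function.uncurry gammaPDF gammaPDFReal
    apply ENNReal.measurable_ofReal.comp
    apply Measurable.ite (measurableSet_le measurable_const measurable_snd)
    · fun_prop
    · exact measurable_const⟩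

lemma gammaKernelAux_apply (a : ℝ) (r : ℝ → ℝ) (hr : Measurable r) (h : ℝ) :
    gammaKernelAux a r hr h = gammaMeasure a (r h) := rfl

lemma biv_meas (ρ : ℝ) : Measurable fun p : ℝ × ℝ => ENNReal.ofReal
        ((2 * Real.pi * Real.sqrt (1 - ρ ^ 2))⁻¹ *
          Real.exp (-(p.1 ^ 2 - 2 * ρ * p.1 * p.2 + p.2 ^ 2) / (2 * (1 - ρ ^ 2)))) := by
  fun_prop

lemma gauss_marginal {ρ : ℝ} (hρ2 : 0 < 1 - ρ^2) (u : ℝ) :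
    ∫⁻ v : ℝ, ENNReal.ofReal ((2 * π * Real.sqrt (1 - ρ ^ 2))⁻¹ *
      Real.exp (-(u ^ 2 - 2 * ρ * u * v + v ^ 2) / (2 * (1 - ρ ^ 2)))) =
    ENNReal.ofReal ((Real.sqrt (2 * π))⁻¹ * Real.exp (-u ^ 2 / 2)) := by
  set b : ℝ := (2*(1-ρ^2))⁻¹ with hb
  have hbpos : 0 < b := by positivity
  have hπ : (0:ℝ) < π := pi_pos
  have hC : 0 ≤ (2 * π * Real.sqrt (1 - ρ ^ 2))⁻¹ * Real.exp (-u ^ 2 / 2) := by positivity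
  have h1 : ∀ v : ℝ, (2 * π * Real.sqrt (1 - ρ ^ 2))⁻¹ *
      Real.exp (-(u ^ 2 - 2 * ρ * u * v + v ^ 2) / (2 * (1 - ρ ^ 2))) =
      ((2 * π * Real.sqrt (1 - ρ ^ 2))⁻¹ * Real.exp (-u ^ 2 / 2)) *
        Real.exp (-b * (v - ρ*u) ^ 2) := by
    intro v
    rw [show -(u ^ 2 - 2 * ρ * u * v + v ^ 2) / (2 * (1 - ρ ^ 2)) =
        -u^2/2 + (-b * (v - ρ*u)^2) from by rw [hb]; field_simp; ring, Real.exp_add]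
    ring
  simp_rw [h1, ENNReal.ofReal_mul hC]
  rw [lintegral_const_mul' _ _ ENNReal.ofReal_ne_top]
  have hint : Integrable (fun v : ℝ => Real.exp (-b * (v - ρ*u) ^ 2)) :=
    (integrable_exp_neg_mul_sq hbpos).comp_sub_right (ρ*u)
  rw [← ofReal_integral_eq_lintegral_ofReal hint
    (Filter.Eventually.of_forall fun v => (exp_pos _).le)]
  rw [integral_sub_right_eq_self (fun x => Real.exp (-b * x ^ 2)) (ρ*u), integral_gaussian]
  rw [← ENNReal.ofReal_mul hC]
  congr 1
  have h2 : π / b = 2*π*(1-ρ^2) := by rw [hb]; field_simp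
  rw [h2, show 2*π*(1-ρ^2) = (2*π)*(1-ρ^2) from by ring,
    Real.sqrt_mul (by positivity)]
  have h3 : √(2*π) * √(2*π) = 2*π := Real.mul_self_sqrt (by positivity)
  have h4 : (0:ℝ) < √(2*π) := Real.sqrt_pos.mpr (by positivity)
  have h5 : (0:ℝ) < √(1-ρ^2) := Real.sqrt_pos.mpr hρ2
  rw [show 2*π*√(1-ρ^2) = √(2*π)*√(2*π)*√(1-ρ^2) from by rw [h3]]
  field_simp

lemma marginal_fst {ρ : ℝ} (hρ2 : 0 < 1 - ρ^2) :
    (volume.withDensity fun p : ℝ × ℝ => ENNReal.ofReal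
        ((2 * Real.pi * Real.sqrt (1 - ρ ^ 2))⁻¹ *
          Real.exp (-(p.1 ^ 2 - 2 * ρ * p.1 * p.2 + p.2 ^ 2) / (2 * (1 - ρ ^ 2))))).fst
    = volume.withDensity fun u : ℝ =>
        ENNReal.ofReal ((Real.sqrt (2*π))⁻¹ * Real.exp (-u^2/2)) := by
  ext s hs
  rw [Measure.fst_apply hs, withDensity_apply _ (measurable_fst hs), withDensity_apply _ hs]
  have hpre : Prod.fst ⁻¹' s = s ×ˢ (Set.univ : Set ℝ) := by ext p; simp
  rw [hpre]
  rw [show (volume : Measure (ℝ × ℝ)).restrict (s ×ˢ (Set.univ : Set ℝ))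
      = (volume.restrict s).prod (volume.restrict Set.univ) from by
    rw [Measure.prod_restrict, ← Measure.volume_eq_prod]]
  rw [Measure.restrict_univ, lintegral_prod _ ((biv_meas ρ).aemeasurable)]
  exact setLIntegral_congr_fun hs (fun u _ => gauss_marginal hρ2 u)

lemma lintegral_div_sqrt {t : ℝ} (ht : 0 < t) {A : Set ℝ} (hA : MeasurableSet A)
    {g : ℝ → ℝ≥0∞} (hg : Measurable g) :
    ∫⁻ u in {u : ℝ | u / Real.sqrt t ∈ A}, g u =
    ENNReal.ofReal (Real.sqrt t) * ∫⁻ h in A, g (Real.sqrt t * h) := by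
  set a := Real.sqrt t with ha
  have hapos : 0 < a := Real.sqrt_pos.mpr ht
  have hSm : MeasurableSet {u : ℝ | u / a ∈ A} := (measurable_id.div_const a) hA
  rw [← lintegral_indicator hSm]
  have hvol : (volume : Measure ℝ) = ENNReal.ofReal |a| • Measure.map (fun x => a * x) volume :=
    (Real.smul_map_volume_mul_left hapos.ne').symm
  conv_lhs => rw [hvol]
  rw [lintegral_smul_measure,
    lintegral_map (hg.indicator hSm) (measurable_const_mul a)]
  have hpt : ∀ h : ℝ, Set.indicator {u : ℝ | u / a ∈ A} g (a * h)
      = A.indicator (fun h' => g (a * h')) h := by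
    intro h
    have : a * h / a = h := by field_simp
    by_cases hmem : h ∈ A <;>
      simp [Set.indicator, this, hmem]
  simp_rw [hpt]
  rw [lintegral_indicator hA, abs_of_pos hapos]
  exact smul_eq_mul _ _

lemma J_ident {s lam : ℝ} (hs : 0 < s) (hlam : 0 < lam) {h t : ℝ} (ht : t ≠ 0)
    (hl : lam = s + h^2/2) :
    gammaPDF s s t * (ENNReal.ofReal (Real.sqrt t) *
      ENNReal.ofReal ((Real.sqrt (2*π))⁻¹ * Real.exp (-(Real.sqrt t * h)^2/2))) =
    ENNReal.ofReal (s^s / Gamma s * (Real.sqrt (2*π))⁻¹ * Gamma (s+1/2) / lam^(s+1/2)) *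
      gammaPDF (s+1/2) lam t := by
  rcases ht.lt_or_gt with htneg | htpos
  · rw [gammaPDF_of_neg htneg, gammaPDF_of_neg htneg, zero_mul, mul_zero]
  · rw [gammaPDF_of_nonneg htpos.le, gammaPDF_of_nonneg htpos.le,
      ← ENNReal.ofReal_mul (by positivity), ← ENNReal.ofReal_mul (by positivity),
      ← ENNReal.ofReal_mul (by positivity)]
    congr 1
    have hsq : (Real.sqrt t * h)^2 = t * h^2 := by rw [mul_pow, Real.sq_sqrt htpos.le]
    have hsqrt : Real.sqrt t = t ^ (1/2 : ℝ) := Real.sqrt_eq_rpow t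
    have hGpos : 0 < Gamma (s+1/2) := Real.Gamma_pos_of_pos (by linarith)
    have hG0 : 0 < Gamma s := Real.Gamma_pos_of_pos hs
    have hlpow : 0 < lam ^ (s+1/2) := Real.rpow_pos_of_pos hlam _
    have hexp : Real.exp (-(lam*t)) = Real.exp (-(s*t)) * Real.exp (-(t*h^2)/2) := by
      rw [← Real.exp_add]; congr 1; rw [hl]; ring
    have hpow : t ^ (s+1/2-1) = t^(s-1) * t^(1/2:ℝ) := by
      rw [← Real.rpow_add htpos]; ring_nf
    rw [hsq, hsqrt, hexp, hpow]
    field_simp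
/-- Let `(U, e₁)` be bivariate normal with zero means, unit variances and correlation `ρ`,
independent of `M² ~ χ²_{n-2}/(n-2)` (i.e. `Gamma((n-2)/2, (n-2)/2)`), and `W_H = U/M`.
Then conditionally on `W_H = h`, `M²` has the `(2/(h²+n-2)) Gamma((n-1)/2)` distribution,
i.e. `Gamma` with shape `(n-1)/2` and rate `(h²+n-2)/2` (density ∝
`t^{(n-1)/2-1} e^{-(h²+n-2)t/2}` on `(0,∞)`). -/
theorem stmt_11 {Ω : Type*} [MeasurableSpace Ω] (P : Measure Ω) [IsProbabilityMeasure P]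
    (n : ℕ) (hn : 3 ≤ n) (ρ : ℝ) (hρ : ρ ∈ Set.Ioo (-1 : ℝ) 1)
    (U e₁ M2 : Ω → ℝ)
    (hUe : Measure.map (fun ω => (U ω, e₁ ω)) P =
      volume.withDensity fun p : ℝ × ℝ => ENNReal.ofReal
        ((2 * Real.pi * Real.sqrt (1 - ρ ^ 2))⁻¹ *
          Real.exp (-(p.1 ^ 2 - 2 * ρ * p.1 * p.2 + p.2 ^ 2) / (2 * (1 - ρ ^ 2)))))
    (hM2 : Measure.map M2 P = gammaMeasure (((n : ℝ) - 2) / 2) (((n : ℝ) - 2) / 2))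
    (hindep : IndepFun (fun ω => (U ω, e₁ ω)) M2 P)
    (WH : Ω → ℝ) (hWH : ∀ ω, WH ω = U ω / Real.sqrt (M2 ω)) :
    ∀ᵐ h ∂(Measure.map WH P),
      condDistrib M2 WH P h = gammaMeasure (((n : ℝ) - 1) / 2) ((h ^ 2 + (n : ℝ) - 2) / 2) := by
  have hn3 : (3:ℝ) ≤ (n:ℝ) := by exact_mod_cast hn
  have hρ2 : 0 < 1 - ρ^2 := by nlinarith [hρ.1, hρ.2]
  set s : ℝ := ((n:ℝ)-2)/2 with hsdef
  have hs : 0 < s := by rw [hsdef]; linarith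
  have hs12 : s + 1/2 = ((n:ℝ)-1)/2 := by rw [hsdef]; ring
  have hlam : ∀ h : ℝ, 0 < s + h^2/2 := fun h => by positivity
  -- measurability of the random variables
  have hUem : AEMeasurable (fun ω => (U ω, e₁ ω)) P := by
    by_contra hcon
    rw [Measure.map_of_not_aemeasurable hcon] at hUe
    have h0 : (0 : Measure (ℝ × ℝ)) Set.univ = 0 := by simp
    rw [hUe, withDensity_apply _ MeasurableSet.univ, Measure.restrict_univ,
      lintegral_eq_zero_iff (biv_meas ρ)] at h0
    have h1 : (volume : Measure (ℝ × ℝ)) {p : ℝ × ℝ | ¬ (ENNReal.ofReal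
        ((2 * Real.pi * Real.sqrt (1 - ρ ^ 2))⁻¹ *
          Real.exp (-(p.1 ^ 2 - 2 * ρ * p.1 * p.2 + p.2 ^ 2) / (2 * (1 - ρ ^ 2)))) = 0)} = 0 :=
      h0
    have h2 : {p : ℝ × ℝ | ¬ (ENNReal.ofReal
        ((2 * Real.pi * Real.sqrt (1 - ρ ^ 2))⁻¹ *
          Real.exp (-(p.1 ^ 2 - 2 * ρ * p.1 * p.2 + p.2 ^ 2) / (2 * (1 - ρ ^ 2)))) = 0)}
        = Set.univ := by
      ext p
      have hpos : 0 < (2 * Real.pi * Real.sqrt (1 - ρ ^ 2))⁻¹ *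
          Real.exp (-(p.1 ^ 2 - 2 * ρ * p.1 * p.2 + p.2 ^ 2) / (2 * (1 - ρ ^ 2))) := by
        have := Real.pi_pos
        have := Real.sqrt_pos.mpr hρ2
        positivity
      simp only [Set.mem_setOf_eq, Set.mem_univ, iff_true, ENNReal.ofReal_eq_zero, not_le]
      exact hpos
    rw [h2] at h1
    have h3 : (volume : Measure (ℝ × ℝ)) ((Set.Ioo (0:ℝ) 1) ×ˢ (Set.Ioo (0:ℝ) 1)) = 0 :=
      measure_mono_null (Set.subset_univ _) h1
    rw [Measure.volume_eq_prod, Measure.prod_prod, Real.volume_Ioo] at h3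
    simp at h3
  have hM2m : AEMeasurable M2 P := by
    by_contra hcon
    rw [Measure.map_of_not_aemeasurable hcon] at hM2
    have : (0 : Measure ℝ) Set.univ = 1 := by
      rw [hM2]; exact (isProbabilityMeasure_gammaMeasure hs hs).measure_univ
    simp at this
  have hU : AEMeasurable U P := measurable_fst.comp_aemeasurable hUem
  have hWHm : AEMeasurable WH P := by
    have hWHe : WH = fun ω => U ω / Real.sqrt (M2 ω) := funext hWH
    rw [hWHe]
    exact hU.div (Real.continuous_sqrt.measurable.comp_aemeasurable hM2m)
  have hUM : AEMeasurable (fun ω => (U ω, M2 ω)) P := hU.prodMk hM2m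
  have hWM : AEMeasurable (fun ω => (WH ω, M2 ω)) P := hWHm.prodMk hM2m
  -- the standard normal density
  set Φ : ℝ → ℝ≥0∞ := fun u => ENNReal.ofReal ((Real.sqrt (2*π))⁻¹ * Real.exp (-u^2/2))
    with hΦdef
  have hΦm : Measurable Φ := by rw [hΦdef]; fun_prop
  -- law of U
  have hUlaw : Measure.map U P = volume.withDensity Φ := by
    have h1 : Measure.map U P = (Measure.map (fun ω => (U ω, e₁ ω)) P).fst := by
      rw [Measure.fst, AEMeasurable.map_map_of_aemeasurable measurable_fst.aemeasurable hUem]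
      rfl
    rw [h1, hUe, marginal_fst hρ2]
  -- joint law of (U, M2)
  have hIndepUM : IndepFun U M2 P := hindep.comp measurable_fst measurable_id
  have hprodlaw : Measure.map (fun ω => (U ω, M2 ω)) P
      = (volume.withDensity Φ).prod (gammaMeasure s s) := by
    rw [← hUlaw, ← hM2]
    exact (indepFun_iff_map_prod_eq_prod_map_map hU hM2m).mp hIndepUM
  -- transformation T
  set T : ℝ × ℝ → ℝ × ℝ := fun p => (p.1 / Real.sqrt p.2, p.2) with hTdef
  have hT : Measurable T := by
    rw [hTdef]
    exact (measurable_fst.div (Real.continuous_sqrt.measurable.comp measurable_snd)).prodMk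
      measurable_snd
  have hρm : Measure.map (fun ω => (WH ω, M2 ω)) P
      = ((volume.withDensity Φ).prod (gammaMeasure s s)).map T := by
    rw [← hprodlaw, AEMeasurable.map_map_of_aemeasurable hT.aemeasurable hUM]
    congr 1
    funext ω
    show (WH ω, M2 ω) = T (U ω, M2 ω)
    rw [hTdef, hWH ω]
  -- the joint density
  set J : ℝ → ℝ → ℝ≥0∞ := fun h t =>
    gammaPDF s s t * (ENNReal.ofReal (Real.sqrt t) * Φ (Real.sqrt t * h)) with hJdef
  have hgPDFm : ∀ a r : ℝ, Measurable (gammaPDF a r) := fun a r =>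
    ENNReal.measurable_ofReal.comp (measurable_gammaPDFReal a r)
  have hJmeas : Measurable fun p : ℝ × ℝ => J p.2 p.1 := by
    rw [hJdef]
    refine (((hgPDFm s s).comp measurable_fst).mul ?_)
    refine (ENNReal.measurable_ofReal.comp
      (Real.continuous_sqrt.measurable.comp measurable_fst)).mul ?_
    exact hΦm.comp ((Real.continuous_sqrt.measurable.comp measurable_fst).mul measurable_snd)
  -- positivity a.e. for the gamma measure
  have haepos : ∀ᵐ t ∂(gammaMeasure s s), 0 < t := by
    rw [ae_iff]
    have hset : {t : ℝ | ¬ 0 < t} = Set.Iic 0 := by ext t; simp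
    rw [hset, gammaMeasure, withDensity_apply _ measurableSet_Iic]
    have hsplit : Set.Iic (0:ℝ) = Set.Iio 0 ∪ {0} := by
      ext t; simp [le_iff_lt_or_eq]
    rw [hsplit]
    refine le_antisymm (le_trans (lintegral_union_le _ _ _) ?_) (by simp)
    rw [lintegral_gammaPDF_of_nonpos le_rfl]
    have h00 : (volume : Measure ℝ).restrict {(0:ℝ)} = 0 :=
      Measure.restrict_eq_zero.mpr Real.volume_singleton
    rw [h00, lintegral_zero_measure]
    simp
  -- rectangle formula for the joint law
  have hrect : ∀ A B : Set ℝ, MeasurableSet A → MeasurableSet B →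
      Measure.map (fun ω => (WH ω, M2 ω)) P (A ×ˢ B) = ∫⁻ h in A, ∫⁻ t in B, J h t := by
    intro A B hA hB
    haveI : IsProbabilityMeasure (gammaMeasure s s) := isProbabilityMeasure_gammaMeasure hs hs
    rw [hρm, Measure.map_apply hT (hA.prod hB), Measure.prod_apply_symm (hT (hA.prod hB))]
    have hsec : ∀ t : ℝ, (volume.withDensity Φ) ((fun u : ℝ => (u, t)) ⁻¹' (T ⁻¹' (A ×ˢ B)))
        = B.indicator (fun t => (volume.withDensity Φ) {u : ℝ | u / Real.sqrt t ∈ A}) t := by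
      intro t
      by_cases hmem : t ∈ B
      · rw [Set.indicator_of_mem hmem]
        congr 1
        ext u
        simp only [Set.mem_preimage, hTdef, Set.mem_prod, Set.mem_setOf_eq]
        exact and_iff_left hmem
      · rw [Set.indicator_of_notMem hmem]
        have hemp : ((fun u : ℝ => (u, t)) ⁻¹' (T ⁻¹' (A ×ˢ B))) = ∅ := by
          ext u
          simp only [Set.mem_preimage, hTdef, Set.mem_prod, Set.mem_setOf_eq,
            Set.mem_empty_iff_false, iff_false, not_and]
          exact fun _ => hmem
        rw [hemp, measure_empty]
    simp_rw [hsec]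
    rw [lintegral_indicator hB]
    have hcongr : ∫⁻ t in B, (volume.withDensity Φ) {u : ℝ | u / Real.sqrt t ∈ A}
          ∂(gammaMeasure s s)
        = ∫⁻ t in B, (ENNReal.ofReal (Real.sqrt t) * ∫⁻ h in A, Φ (Real.sqrt t * h))
          ∂(gammaMeasure s s) := by
      refine lintegral_congr_ae (ae_restrict_of_ae (haepos.mono fun t ht => ?_))
      dsimp only
      have hSm : MeasurableSet {u : ℝ | u / Real.sqrt t ∈ A} :=
        (measurable_id.div_const _) hA
      rw [withDensity_apply _ hSm, lintegral_div_sqrt ht hA hΦm]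
    rw [hcongr, gammaMeasure, restrict_withDensity hB,
      lintegral_withDensity_eq_lintegral_mul _ (hgPDFm s s) ?hinner]
    case hinner =>
      refine (ENNReal.measurable_ofReal.comp Real.continuous_sqrt.measurable).mul ?_
      refine Measurable.lintegral_prod_right (f := fun t h => Φ (Real.sqrt t * h)) ?_
      exact hΦm.comp ((Real.continuous_sqrt.measurable.comp measurable_fst).mul measurable_snd)
    have hpush : ∀ t : ℝ, (gammaPDF s s * fun t =>
          ENNReal.ofReal (Real.sqrt t) * ∫⁻ h in A, Φ (Real.sqrt t * h)) t
        = ∫⁻ h in A, J h t := by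
      intro t
      simp only [Pi.mul_apply]
      rw [← lintegral_const_mul' _ _ ENNReal.ofReal_ne_top,
        ← lintegral_const_mul' _ _ (by simp [gammaPDF] : gammaPDF s s t ≠ ⊤)]
    simp_rw [hpush]
    exact lintegral_lintegral_swap hJmeas.aemeasurable
  -- the marginal density constant of WH
  set C : ℝ → ℝ≥0∞ := fun h => ENNReal.ofReal
    (s^s / Gamma s * (Real.sqrt (2*π))⁻¹ * Gamma (s+1/2) / (s+h^2/2)^(s+1/2)) with hCdef
  have hCm : Measurable C := by rw [hCdef]; fun_prop
  have hprobg : ∀ h : ℝ, IsProbabilityMeasure (gammaMeasure (s+1/2) (s+h^2/2)) :=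
    fun h => isProbabilityMeasure_gammaMeasure (by linarith) (hlam h)
  have hJint : ∀ (h : ℝ) (B : Set ℝ), MeasurableSet B →
      ∫⁻ t in B, J h t = C h * gammaMeasure (s+1/2) (s+h^2/2) B := by
    intro h B hB
    have hae0 : ∀ᵐ t : ℝ ∂(volume.restrict B),
        J h t = C h * gammaPDF (s+1/2) (s+h^2/2) t := by
      refine ae_restrict_of_ae ?_
      have hns : ∀ᵐ t : ℝ ∂(volume : Measure ℝ), t ≠ 0 := by
        rw [ae_iff]
        have hset0 : {t : ℝ | ¬ t ≠ 0} = {(0:ℝ)} := by ext t; simp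
        rw [hset0, Real.volume_singleton]
      exact hns.mono fun t ht => J_ident hs (hlam h) ht rfl
    rw [lintegral_congr_ae hae0, lintegral_const_mul' _ _ ENNReal.ofReal_ne_top,
      gammaMeasure, withDensity_apply _ hB]
  -- the first marginal has density C
  have hfstd : (Measure.map (fun ω => (WH ω, M2 ω)) P).fst = volume.withDensity C := by
    ext A hA
    rw [Measure.fst_apply hA,
      show (Prod.fst ⁻¹' A : Set (ℝ × ℝ)) = A ×ˢ (Set.univ : Set ℝ) from by ext p; simp,
      hrect A Set.univ hA MeasurableSet.univ, withDensity_apply _ hA]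
    refine setLIntegral_congr_fun hA (fun h _ => ?_)
    rw [hJint h Set.univ MeasurableSet.univ, (hprobg h).measure_univ, mul_one]
  -- the conditional kernel
  set κ : Kernel ℝ ℝ := gammaKernelAux (s+1/2) (fun h => s + h^2/2) (by fun_prop) with hκdef
  haveI : IsMarkovKernel κ := ⟨fun h => hprobg h⟩
  haveI : IsProbabilityMeasure (Measure.map (fun ω => (WH ω, M2 ω)) P) :=
    Measure.isProbabilityMeasure_map hWM
  have hcomp : Measure.map (fun ω => (WH ω, M2 ω)) P
      = (Measure.map (fun ω => (WH ω, M2 ω)) P).fst ⊗ₘ κ := by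
    refine ext_of_generate_finite _ generateFrom_prod.symm isPiSystem_prod ?_ ?_
    · rintro S ⟨A, hA, B, hB, rfl⟩
      replace hA : MeasurableSet A := hA
      replace hB : MeasurableSet B := hB
      rw [hrect A B hA hB, Measure.compProd_apply_prod hA hB, hfstd, restrict_withDensity hA,
        lintegral_withDensity_eq_lintegral_mul _ hCm (κ.measurable_coe hB)]
      refine setLIntegral_congr_fun hA (fun h _ => ?_)
      rw [hJint h B hB]
      rfl
    · rw [measure_univ, ← Set.univ_prod_univ,
        Measure.compProd_apply_prod MeasurableSet.univ MeasurableSet.univ]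
      simp [measure_univ]
  have hfst_eq : (Measure.map (fun ω => (WH ω, M2 ω)) P).fst = Measure.map WH P := by
    rw [Measure.fst, AEMeasurable.map_map_of_aemeasurable measurable_fst.aemeasurable hWM]
    rfl
  have key := eq_condKernel_of_measure_eq_compProd κ hcomp
  rw [← hfst_eq]
  filter_upwards [key] with h hk
  rw [condDistrib_def, ← hk, hκdef, gammaKernelAux_apply, hs12,
    show s + h^2/2 = (h^2 + (n:ℝ) - 2)/2 from by rw [hsdef]; ring]
end

section
/- Let $X_n, Y_n$ be sequences of random variables such that $Y_n \to U$ in probability where $U$ is independent of a random variable $V$, and $X_n \to V$ in probability. Suppose additionally that the likelihood-ratio condition holds: under the product measure $Q_n$ making $X_n$ and $Y_n$ independent with their marginal laws, the density ratio $l_n(X_n, Y_n) = \frac{p_n(x,y)}{g_n(x)h_n(y)} \to 1$ in $Q_n$-probability. Then the conditional distribution of $X_n$ given $Y_n$ converges weakly in probability to the (unconditional) law of $V$: for every continuity point $z$ of $F_V$, $F_{X_n|Y_n}(z) \to F_V(z)$ in probability. -/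
open MeasureTheory ProbabilityTheory Filter Set
open scoped ENNReal NNReal

set_option linter.unusedVariables false

lemma stmt19_enn_cancel {a b c d : ℝ≥0∞} (hcd : c ≤ d) (hsum : b + d ≤ a + c)
    (hd : d ≠ ⊤) : b ≤ a := by
  have h : b + d ≤ a + d := hsum.trans (add_le_add_right hcd a)
  exact (ENNReal.add_le_add_iff_right hd).mp h

/-- Existence of a measurable pointwise minorant density giving the same measure, in the finite
measure case. -/
lemma stmt19_exists_minorant {α : Type*} [MeasurableSpace α] (ν : Measure α) (f : α → ℝ≥0∞)
    (hfin : ν.withDensity f Set.univ ≠ ⊤) :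
    ∃ f' : α → ℝ≥0∞, Measurable f' ∧ (∀ x, f' x ≤ f x) ∧ ν.withDensity f' = ν.withDensity f := by
  obtain ⟨f', hm, hle, heq⟩ := exists_measurable_le_lintegral_eq ν f
  refine ⟨f', hm, fun x => hle x, ?_⟩
  ext s hs
  rw [withDensity_apply _ hs, withDensity_apply _ hs]
  have h1 : ∫⁻ a in s, f' a ∂ν ≤ ∫⁻ a in s, f a ∂ν := lintegral_mono hle
  have h2 : ∫⁻ a in sᶜ, f' a ∂ν ≤ ∫⁻ a in sᶜ, f a ∂ν := lintegral_mono hle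
  have hsum : ∫⁻ a in s, f a ∂ν + ∫⁻ a in sᶜ, f a ∂ν
      ≤ ∫⁻ a in s, f' a ∂ν + ∫⁻ a in sᶜ, f' a ∂ν := by
    rw [lintegral_add_compl f' hs, ← heq]
    calc ∫⁻ a in s, f a ∂ν + ∫⁻ a in sᶜ, f a ∂ν
        = ν.withDensity f s + ν.withDensity f sᶜ := by
          rw [withDensity_apply _ hs, withDensity_apply _ hs.compl]
      _ = ν.withDensity f Set.univ := measure_add_measure_compl hs
      _ = ∫⁻ a, f a ∂ν := by rw [withDensity_apply _ MeasurableSet.univ, Measure.restrict_univ]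
      _ ≤ ∫⁻ a, f a ∂ν := le_rfl
  have hfin2 : ∫⁻ a in sᶜ, f a ∂ν ≠ ⊤ := by
    rw [← withDensity_apply _ hs.compl]
    exact ne_top_of_le_ne_top hfin (measure_mono (subset_univ _))
  exact le_antisymm h1 (stmt19_enn_cancel h2 hsum hfin2)

/-- Pointwise likelihood-ratio inequality. -/
lemma stmt19_ratio_pointwise {pq gq hq lq ε' : ℝ} (hε : 0 < ε') (hε1 : ε' < 1)
    (hlq : lq = pq / (gq * hq)) (hle : |lq - 1| ≤ ε') :
    ENNReal.ofReal (1 - ε') * (ENNReal.ofReal gq * ENNReal.ofReal hq) ≤ ENNReal.ofReal pq := by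
  rcases le_or_gt gq 0 with hg | hg
  · simp [ENNReal.ofReal_eq_zero.mpr hg]
  rcases le_or_gt hq 0 with hh | hh
  · simp [ENNReal.ofReal_eq_zero.mpr hh]
  have hgh : gq * hq ≠ 0 := by positivity
  have hpl : pq = lq * (gq * hq) := by rw [hlq, div_mul_cancel₀ _ hgh]
  have hl1 : 1 - ε' ≤ lq := by
    have := abs_le.mp hle
    linarith [this.1]
  have hreal : (1 - ε') * (gq * hq) ≤ pq := by
    rw [hpl]
    have hghpos : 0 < gq * hq := by positivity
    nlinarith
  calc ENNReal.ofReal (1 - ε') * (ENNReal.ofReal gq * ENNReal.ofReal hq)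
      = ENNReal.ofReal ((1 - ε') * (gq * hq)) := by
        rw [ENNReal.ofReal_mul (by linarith), ENNReal.ofReal_mul hg.le]
    _ ≤ ENNReal.ofReal pq := ENNReal.ofReal_le_ofReal hreal

/-- Product of withDensity measures. -/
lemma stmt19_prod_withDensity {g h : ℝ → ℝ≥0∞} (hgm : Measurable g) (hhm : Measurable h)
    [IsFiniteMeasure (volume.withDensity g)] [IsFiniteMeasure (volume.withDensity h)] :
    (volume.withDensity g).prod (volume.withDensity h) =
      (volume : Measure (ℝ × ℝ)).withDensity (fun q => g q.1 * h q.2) := by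
  refine Measure.prod_eq fun s t hs ht => ?_
  rw [withDensity_apply _ (hs.prod ht), withDensity_apply _ hs, withDensity_apply _ ht]
  rw [Measure.volume_eq_prod, ← Measure.prod_restrict]
  exact lintegral_prod_mul hgm.aemeasurable hhm.aemeasurable

/-- One-sided total-variation-type bound from the likelihood ratio being close to 1. -/
lemma stmt19_oneside {Ω : Type*} [MeasurableSpace Ω] (P : Measure Ω) [IsProbabilityMeasure P]
    (X Y : Ω → ℝ) (hXm : Measurable X) (hYm : Measurable Y)
    (p : ℝ × ℝ → ℝ) (g h : ℝ → ℝ)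
    (hp : Measure.map (fun ω => (X ω, Y ω)) P = volume.withDensity fun q => ENNReal.ofReal (p q))
    (hg : Measure.map X P = volume.withDensity fun x => ENNReal.ofReal (g x))
    (hh : Measure.map Y P = volume.withDensity fun y => ENNReal.ofReal (h y))
    (l : ℝ × ℝ → ℝ) (hl : ∀ q, l q = p q / (g q.1 * h q.2))
    {ε' : ℝ} (hε'0 : 0 < ε') (hε'1 : ε' < 1)
    {S : Set (ℝ × ℝ)} (hS : MeasurableSet S) :
    (((Measure.map X P).prod (Measure.map Y P)) S).toReal ≤
      ((Measure.map (fun ω => (X ω, Y ω)) P) S).toReal + ε' +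
        (((Measure.map X P).prod (Measure.map Y P)) {q | ε' < |l q - 1|}).toReal := by
  haveI h1 : IsProbabilityMeasure (Measure.map X P) := Measure.isProbabilityMeasure_map hXm.aemeasurable
  haveI h2 : IsProbabilityMeasure (Measure.map Y P) := Measure.isProbabilityMeasure_map hYm.aemeasurable
  haveI h3 : IsProbabilityMeasure (Measure.map (fun ω => (X ω, Y ω)) P) :=
    Measure.isProbabilityMeasure_map (hXm.prodMk hYm).aemeasurable
  obtain ⟨g', hg'm, hg'le, hg'eq⟩ := stmt19_exists_minorant volume
    (fun x => ENNReal.ofReal (g x)) (by rw [← hg]; exact measure_ne_top _ _)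
  obtain ⟨h', hh'm, hh'le, hh'eq⟩ := stmt19_exists_minorant volume
    (fun y => ENNReal.ofReal (h y)) (by rw [← hh]; exact measure_ne_top _ _)
  have hμ : Measure.map X P = volume.withDensity g' := by rw [hg, hg'eq]
  have hν : Measure.map Y P = volume.withDensity h' := by rw [hh, hh'eq]
  haveI : IsFiniteMeasure (volume.withDensity g') := by rw [← hμ]; infer_instance
  haveI : IsFiniteMeasure (volume.withDensity h') := by rw [← hν]; infer_instance
  have hQ : (Measure.map X P).prod (Measure.map Y P)
      = (volume : Measure (ℝ × ℝ)).withDensity (fun q => g' q.1 * h' q.2) := by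
    rw [hμ, hν]; exact stmt19_prod_withDensity hg'm hh'm
  set Q := (Measure.map X P).prod (Measure.map Y P) with hQdef
  set B := {q : ℝ × ℝ | ε' < |l q - 1|} with hB
  set C := (toMeasurable Q B)ᶜ with hCdef
  have hCmeas : MeasurableSet C := (measurableSet_toMeasurable _ _).compl
  have hpoint : ∀ q ∈ C, ENNReal.ofReal (1 - ε') * (g' q.1 * h' q.2) ≤ ENNReal.ofReal (p q) := by
    intro q hq
    have hqB : q ∉ B := fun hqB => hq (subset_toMeasurable _ _ hqB)
    have habs : |l q - 1| ≤ ε' := not_lt.mp hqB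
    calc ENNReal.ofReal (1 - ε') * (g' q.1 * h' q.2)
        ≤ ENNReal.ofReal (1 - ε') * (ENNReal.ofReal (g q.1) * ENNReal.ofReal (h q.2)) :=
          mul_le_mul' le_rfl (mul_le_mul' (hg'le _) (hh'le _))
      _ ≤ ENNReal.ofReal (p q) := stmt19_ratio_pointwise hε'0 hε'1 (hl q) habs
  have hT : MeasurableSet (S ∩ C) := hS.inter hCmeas
  have key : ENNReal.ofReal (1 - ε') * Q (S ∩ C) ≤ Measure.map (fun ω => (X ω, Y ω)) P S := by
    rw [hQ, withDensity_apply _ hT, hp, withDensity_apply _ hS]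
    calc ENNReal.ofReal (1 - ε') * ∫⁻ q in S ∩ C, g' q.1 * h' q.2
        = ∫⁻ q in S ∩ C, ENNReal.ofReal (1 - ε') * (g' q.1 * h' q.2) :=
          (lintegral_const_mul _ (hg'm.comp measurable_fst |>.mul
            (hh'm.comp measurable_snd))).symm
      _ ≤ ∫⁻ q in S ∩ C, ENNReal.ofReal (p q) :=
          setLIntegral_mono' hT fun q hq => hpoint q hq.2
      _ ≤ ∫⁻ q in S, ENNReal.ofReal (p q) := lintegral_mono_set inter_subset_left
  have hQS : (Q S).toReal ≤ (Q (S ∩ C)).toReal + (Q B).toReal := by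
    have hQle : Q S ≤ Q (S ∩ C) + Q B := by
      calc Q S = Q (S ∩ C) + Q (S \ C) := (measure_inter_add_diff S hCmeas).symm
        _ ≤ Q (S ∩ C) + Q (toMeasurable Q B) := by
            refine add_le_add_right (measure_mono fun q hq => ?_) _
            have := hq.2
            simpa [hCdef, not_not] using this
        _ = Q (S ∩ C) + Q B := by rw [measure_toMeasurable]
    calc (Q S).toReal ≤ (Q (S ∩ C) + Q B).toReal :=
          ENNReal.toReal_mono (ENNReal.add_ne_top.mpr ⟨measure_ne_top _ _, measure_ne_top _ _⟩)
            hQle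
      _ = (Q (S ∩ C)).toReal + (Q B).toReal :=
          ENNReal.toReal_add (measure_ne_top _ _) (measure_ne_top _ _)
  have hu1 : (Q (S ∩ C)).toReal ≤ 1 := by
    have := ENNReal.toReal_mono ENNReal.one_ne_top (prob_le_one (μ := Q) (s := S ∩ C))
    simpa using this
  have hkey' : (1 - ε') * (Q (S ∩ C)).toReal
      ≤ ((Measure.map (fun ω => (X ω, Y ω)) P) S).toReal := by
    have := ENNReal.toReal_mono (measure_ne_top _ _) key
    rwa [ENNReal.toReal_mul, ENNReal.toReal_ofReal (by linarith)] at this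
  have hnn : (0:ℝ) ≤ (Q (S ∩ C)).toReal := ENNReal.toReal_nonneg
  nlinarith [hQS, hkey', hu1, hnn]

/-- Two-sided bound (in ennreal form). -/
lemma stmt19_twoside {Ω : Type*} [MeasurableSpace Ω] (P : Measure Ω) [IsProbabilityMeasure P]
    (X Y : Ω → ℝ) (hXm : Measurable X) (hYm : Measurable Y)
    (p : ℝ × ℝ → ℝ) (g h : ℝ → ℝ)
    (hp : Measure.map (fun ω => (X ω, Y ω)) P = volume.withDensity fun q => ENNReal.ofReal (p q))
    (hg : Measure.map X P = volume.withDensity fun x => ENNReal.ofReal (g x))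
    (hh : Measure.map Y P = volume.withDensity fun y => ENNReal.ofReal (h y))
    (l : ℝ × ℝ → ℝ) (hl : ∀ q, l q = p q / (g q.1 * h q.2))
    {ε' : ℝ} (hε'0 : 0 < ε') (hε'1 : ε' < 1)
    {S : Set (ℝ × ℝ)} (hS : MeasurableSet S) :
    Measure.map (fun ω => (X ω, Y ω)) P S ≤ ((Measure.map X P).prod (Measure.map Y P)) S +
        ENNReal.ofReal (ε' + (((Measure.map X P).prod (Measure.map Y P))
          {q | ε' < |l q - 1|}).toReal) ∧
      ((Measure.map X P).prod (Measure.map Y P)) S ≤ Measure.map (fun ω => (X ω, Y ω)) P S +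
        ENNReal.ofReal (ε' + (((Measure.map X P).prod (Measure.map Y P))
          {q | ε' < |l q - 1|}).toReal) := by
  haveI h1 : IsProbabilityMeasure (Measure.map X P) := Measure.isProbabilityMeasure_map hXm.aemeasurable
  haveI h2 : IsProbabilityMeasure (Measure.map Y P) := Measure.isProbabilityMeasure_map hYm.aemeasurable
  haveI h3 : IsProbabilityMeasure (Measure.map (fun ω => (X ω, Y ω)) P) :=
    Measure.isProbabilityMeasure_map (hXm.prodMk hYm).aemeasurable
  set Q := (Measure.map X P).prod (Measure.map Y P) with hQdef
  set ρ := Measure.map (fun ω => (X ω, Y ω)) P with hρdef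
  set r := ε' + (Q {q | ε' < |l q - 1|}).toReal with hr
  have hrnn : 0 ≤ r := by
    have : (0:ℝ) ≤ (Q {q | ε' < |l q - 1|}).toReal := ENNReal.toReal_nonneg
    simp [hr]; linarith
  have hone : ∀ {S : Set (ℝ × ℝ)}, MeasurableSet S → (Q S).toReal ≤ (ρ S).toReal + r :=
    fun {S} hS => by
      have := stmt19_oneside P X Y hXm hYm p g h hp hg hh l hl hε'0 hε'1 hS
      simp only [← hQdef, ← hρdef] at this
      linarith [this]
  have htwo : (ρ S).toReal ≤ (Q S).toReal + r := by
    have hcompl := hone hS.compl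
    have hρc : (ρ Sᶜ).toReal = 1 - (ρ S).toReal := by
      rw [measure_compl hS (measure_ne_top _ _), measure_univ,
        ENNReal.toReal_sub_of_le prob_le_one ENNReal.one_ne_top, ENNReal.toReal_one]
    have hQc : (Q Sᶜ).toReal = 1 - (Q S).toReal := by
      rw [measure_compl hS (measure_ne_top _ _), measure_univ,
        ENNReal.toReal_sub_of_le prob_le_one ENNReal.one_ne_top, ENNReal.toReal_one]
    rw [hρc, hQc] at hcompl
    linarith
  constructor
  · calc ρ S = ENNReal.ofReal ((ρ S).toReal) := (ENNReal.ofReal_toReal (measure_ne_top _ _)).symm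
      _ ≤ ENNReal.ofReal ((Q S).toReal + r) := ENNReal.ofReal_le_ofReal htwo
      _ = ENNReal.ofReal ((Q S).toReal) + ENNReal.ofReal r :=
          ENNReal.ofReal_add ENNReal.toReal_nonneg hrnn
      _ = Q S + ENNReal.ofReal r := by rw [ENNReal.ofReal_toReal (measure_ne_top _ _)]
  · calc Q S = ENNReal.ofReal ((Q S).toReal) := (ENNReal.ofReal_toReal (measure_ne_top _ _)).symm
      _ ≤ ENNReal.ofReal ((ρ S).toReal + r) := ENNReal.ofReal_le_ofReal (hone hS)
      _ = ENNReal.ofReal ((ρ S).toReal) + ENNReal.ofReal r :=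
          ENNReal.ofReal_add ENNReal.toReal_nonneg hrnn
      _ = ρ S + ENNReal.ofReal r := by rw [ENNReal.ofReal_toReal (measure_ne_top _ _)]

/-- Chebyshev-type bound for the conditional cdf. -/
lemma stmt19_cheb {Ω : Type*} [MeasurableSpace Ω] (P : Measure Ω) [IsProbabilityMeasure P]
    (X Y : Ω → ℝ) (hXm : Measurable X) (hYm : Measurable Y) (z e : ℝ) (he : 0 < e)
    (r : ℝ≥0∞)
    (hbound : ∀ S : Set (ℝ × ℝ), MeasurableSet S →
      Measure.map (fun ω => (X ω, Y ω)) P S ≤ ((Measure.map X P).prod (Measure.map Y P)) S + r ∧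
      ((Measure.map X P).prod (Measure.map Y P)) S ≤
        Measure.map (fun ω => (X ω, Y ω)) P S + r) :
    ENNReal.ofReal e * P {ω | e < |((condDistrib X Y P (Y ω)) (Iic z)).toReal -
        ((Measure.map X P) (Iic z)).toReal|} ≤ 2 * r := by
  haveI h1 : IsProbabilityMeasure (Measure.map X P) := Measure.isProbabilityMeasure_map hXm.aemeasurable
  haveI h2 : IsProbabilityMeasure (Measure.map Y P) := Measure.isProbabilityMeasure_map hYm.aemeasurable
  haveI h3 : IsProbabilityMeasure (Measure.map (fun ω => (X ω, Y ω)) P) :=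
    Measure.isProbabilityMeasure_map (hXm.prodMk hYm).aemeasurable
  set κ := condDistrib X Y P with hκ
  set b := (Measure.map X P) (Iic z) with hb
  have hκmeas : Measurable fun y => κ y (Iic z) := Kernel.measurable_coe _ measurableSet_Iic
  set A₁ := {y : ℝ | b + ENNReal.ofReal e ≤ κ y (Iic z)} with hA₁
  set A₂ := {y : ℝ | κ y (Iic z) + ENNReal.ofReal e ≤ b} with hA₂
  have hA₁m : MeasurableSet A₁ := measurableSet_le measurable_const hκmeas
  have hA₂m : MeasurableSet A₂ := measurableSet_le (hκmeas.add measurable_const) measurable_const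
  have hpre : ∀ (A : Set ℝ), MeasurableSet A →
      Measure.map (fun ω => (X ω, Y ω)) P (Iic z ×ˢ A) = P (Y ⁻¹' A ∩ X ⁻¹' Iic z) := by
    intro A hA
    rw [Measure.map_apply (hXm.prodMk hYm) (measurableSet_Iic.prod hA)]
    congr 1
    ext ω
    simp [Set.mem_prod, and_comm]
  have hQprod : ∀ (A : Set ℝ), MeasurableSet A →
      ((Measure.map X P).prod (Measure.map Y P)) (Iic z ×ˢ A) = b * P (Y ⁻¹' A) := by
    intro A hA
    rw [Measure.prod_prod, Measure.map_apply hYm hA]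
  -- first direction
  have hche₁ : ENNReal.ofReal e * P (Y ⁻¹' A₁) ≤ r := by
    have hint : ∫⁻ ω in Y ⁻¹' A₁, κ (Y ω) (Iic z) ∂P = P (Y ⁻¹' A₁ ∩ X ⁻¹' Iic z) :=
      setLIntegral_preimage_condDistrib hYm hXm.aemeasurable measurableSet_Iic hA₁m
    have hlow : (b + ENNReal.ofReal e) * P (Y ⁻¹' A₁)
        ≤ Measure.map (fun ω => (X ω, Y ω)) P (Iic z ×ˢ A₁) := by
      rw [hpre A₁ hA₁m, ← hint]
      calc (b + ENNReal.ofReal e) * P (Y ⁻¹' A₁)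
          = ∫⁻ _ in Y ⁻¹' A₁, (b + ENNReal.ofReal e) ∂P := (setLIntegral_const _ _).symm
        _ ≤ ∫⁻ ω in Y ⁻¹' A₁, κ (Y ω) (Iic z) ∂P :=
            setLIntegral_mono' (hYm hA₁m) fun ω hω => hω
    have hup := (hbound (Iic z ×ˢ A₁) (measurableSet_Iic.prod hA₁m)).1
    rw [hQprod A₁ hA₁m] at hup
    have : b * P (Y ⁻¹' A₁) + ENNReal.ofReal e * P (Y ⁻¹' A₁) ≤ b * P (Y ⁻¹' A₁) + r := by
      rw [← add_mul]
      exact hlow.trans hup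
    exact (ENNReal.add_le_add_iff_left (by
      exact ENNReal.mul_ne_top (measure_ne_top _ _) (measure_ne_top _ _))).mp this
  -- second direction
  have hche₂ : ENNReal.ofReal e * P (Y ⁻¹' A₂) ≤ r := by
    have hint : ∫⁻ ω in Y ⁻¹' A₂, κ (Y ω) (Iic z) ∂P = P (Y ⁻¹' A₂ ∩ X ⁻¹' Iic z) :=
      setLIntegral_preimage_condDistrib hYm hXm.aemeasurable measurableSet_Iic hA₂m
    have hlow : ∫⁻ ω in Y ⁻¹' A₂, κ (Y ω) (Iic z) ∂P + ENNReal.ofReal e * P (Y ⁻¹' A₂)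
        ≤ b * P (Y ⁻¹' A₂) := by
      calc ∫⁻ ω in Y ⁻¹' A₂, κ (Y ω) (Iic z) ∂P + ENNReal.ofReal e * P (Y ⁻¹' A₂)
          = ∫⁻ ω in Y ⁻¹' A₂, (κ (Y ω) (Iic z) + ENNReal.ofReal e) ∂P := by
            rw [lintegral_add_right _ measurable_const, setLIntegral_const]
        _ ≤ ∫⁻ _ in Y ⁻¹' A₂, b ∂P := setLIntegral_mono' (hYm hA₂m) fun ω hω => hω
        _ = b * P (Y ⁻¹' A₂) := setLIntegral_const _ _
    have hup := (hbound (Iic z ×ˢ A₂) (measurableSet_Iic.prod hA₂m)).2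
    rw [hQprod A₂ hA₂m, hpre A₂ hA₂m, ← hint] at hup
    have : ∫⁻ ω in Y ⁻¹' A₂, κ (Y ω) (Iic z) ∂P + ENNReal.ofReal e * P (Y ⁻¹' A₂)
        ≤ ∫⁻ ω in Y ⁻¹' A₂, κ (Y ω) (Iic z) ∂P + r := hlow.trans hup
    refine (ENNReal.add_le_add_iff_left ?_).mp this
    rw [hint]
    exact measure_ne_top _ _
  -- inclusion
  have hincl : {ω | e < |((κ (Y ω)) (Iic z)).toReal - b.toReal|}
      ⊆ Y ⁻¹' A₁ ∪ Y ⁻¹' A₂ := by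
    intro ω hω
    simp only [Set.mem_setOf_eq] at hω
    have hfin : κ (Y ω) (Iic z) ≠ ⊤ := measure_ne_top _ _
    have hbfin : b ≠ ⊤ := measure_ne_top _ _
    rcases lt_abs.mp hω with h | h
    · left
      show b + ENNReal.ofReal e ≤ κ (Y ω) (Iic z)
      have : b.toReal + e ≤ (κ (Y ω) (Iic z)).toReal := by linarith
      calc b + ENNReal.ofReal e = ENNReal.ofReal (b.toReal + e) := by
            rw [ENNReal.ofReal_add ENNReal.toReal_nonneg he.le, ENNReal.ofReal_toReal hbfin]
        _ ≤ ENNReal.ofReal ((κ (Y ω) (Iic z)).toReal) := ENNReal.ofReal_le_ofReal this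
        _ = κ (Y ω) (Iic z) := ENNReal.ofReal_toReal hfin
    · right
      show κ (Y ω) (Iic z) + ENNReal.ofReal e ≤ b
      have : (κ (Y ω) (Iic z)).toReal + e ≤ b.toReal := by
        have := h
        linarith
      calc κ (Y ω) (Iic z) + ENNReal.ofReal e
          = ENNReal.ofReal ((κ (Y ω) (Iic z)).toReal + e) := by
            rw [ENNReal.ofReal_add ENNReal.toReal_nonneg he.le, ENNReal.ofReal_toReal hfin]
        _ ≤ ENNReal.ofReal (b.toReal) := ENNReal.ofReal_le_ofReal this
        _ = b := ENNReal.ofReal_toReal hbfin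
  calc ENNReal.ofReal e * P {ω | e < |((κ (Y ω)) (Iic z)).toReal - b.toReal|}
      ≤ ENNReal.ofReal e * (P (Y ⁻¹' A₁) + P (Y ⁻¹' A₂)) := by
        refine mul_le_mul' le_rfl ((measure_mono hincl).trans (measure_union_le _ _))
    _ = ENNReal.ofReal e * P (Y ⁻¹' A₁) + ENNReal.ofReal e * P (Y ⁻¹' A₂) := mul_add _ _ _
    _ ≤ r + r := add_le_add hche₁ hche₂
    _ = 2 * r := (two_mul r).symm

/-- Convergence in probability implies convergence of the cdf at continuity points. -/
lemma stmt19_marginal {Ω : Type*} [MeasurableSpace Ω] (P : Measure Ω) [IsProbabilityMeasure P]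
    (X : ℕ → Ω → ℝ) (V : Ω → ℝ) (hXm : ∀ n, Measurable (X n)) (hVm : Measurable V)
    (hXV : ∀ ε > (0 : ℝ), Tendsto (fun n => P {ω | ε < |X n ω - V ω|}) atTop (nhds 0))
    (z : ℝ) (hz : ContinuousAt (fun t => ((Measure.map V P) (Iic t)).toReal) z) :
    Tendsto (fun n => ((Measure.map (X n) P) (Iic z)).toReal) atTop
      (nhds (((Measure.map V P) (Iic z)).toReal)) := by
  have hVprob : IsProbabilityMeasure (Measure.map V P) := Measure.isProbabilityMeasure_map hVm.aemeasurable
  rw [Metric.tendsto_atTop]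
  intro ε3 hε3
  obtain ⟨δ, hδ, hball⟩ := Metric.continuousAt_iff.mp hz (ε3 / 2) (by linarith)
  set F : ℝ → ℝ := fun t => ((Measure.map V P) (Iic t)).toReal with hF
  have hplus : |F (z + δ / 2) - F z| < ε3 / 2 := by
    have : dist (z + δ / 2) z < δ := by
      rw [Real.dist_eq]
      have hx : z + δ / 2 - z = δ / 2 := by ring
      rw [hx, abs_of_nonneg (by linarith)]
      linarith
    have := hball this
    rwa [Real.dist_eq] at this
  have hminus : |F (z - δ / 2) - F z| < ε3 / 2 := by
    have : dist (z - δ / 2) z < δ := by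
      rw [Real.dist_eq]
      have : z - δ / 2 - z = -(δ / 2) := by ring
      rw [this, abs_neg, abs_of_nonneg (by linarith)]
      linarith
    have := hball this
    rwa [Real.dist_eq] at this
  have hev : ∀ᶠ n in atTop, P {ω | δ / 2 < |X n ω - V ω|} < ENNReal.ofReal (ε3 / 2) :=
    (hXV (δ / 2) (by linarith)).eventually_lt_const (by
      simp only [ENNReal.ofReal_pos]; linarith)
  obtain ⟨N, hN⟩ := eventually_atTop.mp hev
  refine ⟨N, fun n hn => ?_⟩
  have hbad := hN n hn
  set bad := P {ω | δ / 2 < |X n ω - V ω|} with hbaddef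
  have hbadR : bad.toReal < ε3 / 2 := by
    have h1 := ENNReal.toReal_mono (by simp) hbad.le
    rw [ENNReal.toReal_ofReal (by linarith)] at h1
    -- need strict; redo with toReal_lt
    have := ENNReal.toReal_lt_toReal (ne_top_of_lt hbad) (by simp : ENNReal.ofReal (ε3/2) ≠ ⊤)
    rw [ENNReal.toReal_ofReal (by linarith : (0:ℝ) ≤ ε3/2)] at this
    exact this.mpr hbad
  -- upper bound
  have hsub1 : (X n) ⁻¹' (Iic z) ⊆ V ⁻¹' (Iic (z + δ / 2)) ∪ {ω | δ / 2 < |X n ω - V ω|} := by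
    intro ω hω
    simp only [Set.mem_preimage, Set.mem_Iic] at hω
    by_cases hc : δ / 2 < |X n ω - V ω|
    · exact Or.inr hc
    · left
      simp only [Set.mem_preimage, Set.mem_Iic]
      have := abs_le.mp (not_lt.mp hc)
      linarith [this.1]
  have hsub2 : V ⁻¹' (Iic (z - δ / 2)) ⊆ (X n) ⁻¹' (Iic z) ∪ {ω | δ / 2 < |X n ω - V ω|} := by
    intro ω hω
    simp only [Set.mem_preimage, Set.mem_Iic] at hω
    by_cases hc : δ / 2 < |X n ω - V ω|
    · exact Or.inr hc
    · left
      simp only [Set.mem_preimage, Set.mem_Iic]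
      have := abs_le.mp (not_lt.mp hc)
      linarith [this.2]
  have hup : Measure.map (X n) P (Iic z) ≤ Measure.map V P (Iic (z + δ / 2)) + bad := by
    rw [Measure.map_apply (hXm n) measurableSet_Iic, Measure.map_apply hVm measurableSet_Iic]
    exact (measure_mono hsub1).trans (measure_union_le _ _)
  have hlo : Measure.map V P (Iic (z - δ / 2)) ≤ Measure.map (X n) P (Iic z) + bad := by
    rw [Measure.map_apply (hXm n) measurableSet_Iic, Measure.map_apply hVm measurableSet_Iic]
    exact (measure_mono hsub2).trans (measure_union_le _ _)
  have hXprob : IsProbabilityMeasure (Measure.map (X n) P) :=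
    Measure.isProbabilityMeasure_map (hXm n).aemeasurable
  have hupR : ((Measure.map (X n) P) (Iic z)).toReal ≤ F (z + δ / 2) + bad.toReal := by
    have h1 := ENNReal.toReal_mono
      (ENNReal.add_ne_top.mpr ⟨measure_ne_top _ _, measure_ne_top _ _⟩) hup
    rwa [ENNReal.toReal_add (measure_ne_top _ _) (measure_ne_top _ _)] at h1
  have hloR : F (z - δ / 2) ≤ ((Measure.map (X n) P) (Iic z)).toReal + bad.toReal := by
    have h1 := ENNReal.toReal_mono
      (ENNReal.add_ne_top.mpr ⟨measure_ne_top _ _, measure_ne_top _ _⟩) hlo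
    rwa [ENNReal.toReal_add (measure_ne_top _ _) (measure_ne_top _ _)] at h1
  rw [Real.dist_eq, abs_lt]
  have h1 := abs_lt.mp hplus
  have h2 := abs_lt.mp hminus
  constructor <;> [nlinarith [h2.1, hloR, hbadR]; nlinarith [h1.2, hupR, hbadR]]

/-- Abstract core of Theorem 3 (efficiency): if `Yₙ → U` in probability, `Xₙ → V` in
probability, `U` and `V` are independent, `(Xₙ, Yₙ)` has joint density `pₙ` with marginal
densities `gₙ, hₙ`, and the likelihood ratio `lₙ = pₙ/(gₙhₙ) → 1` in probability under the
product of the marginal laws, then the conditional distribution of `Xₙ` given `Yₙ` converges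
weakly in probability to the law of `V`: at every continuity point `z` of the c.d.f. of `V`,
`F_{Xₙ|Yₙ}(z) → F_V(z)` in probability. -/
theorem stmt_19 {Ω : Type*} [MeasurableSpace Ω] (P : Measure Ω) [IsProbabilityMeasure P]
    (X Y : ℕ → Ω → ℝ) (U V : Ω → ℝ)
    (hXm : ∀ n, Measurable (X n)) (hYm : ∀ n, Measurable (Y n))
    (hUm : Measurable U) (hVm : Measurable V)
    (hUV : IndepFun U V P)
    (hYU : ∀ ε > (0 : ℝ), Tendsto (fun n => P {ω | ε < |Y n ω - U ω|}) atTop (nhds 0))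
    (hXV : ∀ ε > (0 : ℝ), Tendsto (fun n => P {ω | ε < |X n ω - V ω|}) atTop (nhds 0))
    (p : ℕ → ℝ × ℝ → ℝ) (g h : ℕ → ℝ → ℝ)
    (hp : ∀ n, Measure.map (fun ω => (X n ω, Y n ω)) P =
      volume.withDensity fun q => ENNReal.ofReal (p n q))
    (hg : ∀ n, Measure.map (X n) P = volume.withDensity fun x => ENNReal.ofReal (g n x))
    (hh : ∀ n, Measure.map (Y n) P = volume.withDensity fun y => ENNReal.ofReal (h n y))
    (l : ℕ → ℝ × ℝ → ℝ) (hl : ∀ n q, l n q = p n q / (g n q.1 * h n q.2))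
    (hlto1 : ∀ ε > (0 : ℝ),
      Tendsto (fun n => ((Measure.map (X n) P).prod (Measure.map (Y n) P))
        {q : ℝ × ℝ | ε < |l n q - 1|}) atTop (nhds 0)) :
    ∀ z : ℝ, ContinuousAt (fun t => ((Measure.map V P) (Iic t)).toReal) z →
      ∀ ε > (0 : ℝ),
        Tendsto (fun n => P {ω | ε <
            |((condDistrib (X n) (Y n) P (Y n ω)) (Iic z)).toReal -
              ((Measure.map V P) (Iic z)).toReal|}) atTop (nhds 0) := by
  intro z hz ε hε
  set c : ℝ := ((Measure.map V P) (Iic z)).toReal with hc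
  rw [ENNReal.tendsto_atTop_zero]
  intro η hη
  set η0 := min η 1 with hη0
  have hη0pos : 0 < η0 := lt_min hη zero_lt_one
  have hη0top : η0 ≠ ⊤ := ((min_le_right η 1).trans_lt ENNReal.one_lt_top).ne
  have hη0R : 0 < η0.toReal := ENNReal.toReal_pos hη0pos.ne' hη0top
  set ε' := min (1/2 : ℝ) (ε * η0.toReal / 32) with hε'def
  have hε'0 : 0 < ε' := lt_min (by norm_num) (by positivity)
  have hε'1 : ε' < 1 := (min_le_left _ _).trans_lt (by norm_num)
  have hM := stmt19_marginal P X V hXm hVm hXV z hz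
  obtain ⟨N1, hN1⟩ := Metric.tendsto_atTop.mp hM (ε / 2) (by linarith)
  have hev2 : ∀ᶠ n in atTop, ((Measure.map (X n) P).prod (Measure.map (Y n) P))
      {q : ℝ × ℝ | ε' < |l n q - 1|} < ENNReal.ofReal ε' :=
    (hlto1 ε' hε'0).eventually_lt_const (by simpa using ENNReal.ofReal_pos.mpr hε'0)
  obtain ⟨N2, hN2⟩ := eventually_atTop.mp hev2
  refine ⟨max N1 N2, fun n hn => ?_⟩
  have hn1 := hN1 n ((le_max_left _ _).trans hn)
  have hn2 := hN2 n ((le_max_right _ _).trans hn)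
  set QB := ((Measure.map (X n) P).prod (Measure.map (Y n) P)) {q : ℝ × ℝ | ε' < |l n q - 1|}
    with hQBdef
  have hQBR : QB.toReal ≤ ε' := ENNReal.toReal_le_of_le_ofReal hε'0.le hn2.le
  set rn := ε' + QB.toReal with hrn
  have hrnn : 0 ≤ rn := by
    have : (0:ℝ) ≤ QB.toReal := ENNReal.toReal_nonneg
    linarith
  have hbound : ∀ S : Set (ℝ × ℝ), MeasurableSet S →
      Measure.map (fun ω => (X n ω, Y n ω)) P S ≤
        ((Measure.map (X n) P).prod (Measure.map (Y n) P)) S + ENNReal.ofReal rn ∧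
      ((Measure.map (X n) P).prod (Measure.map (Y n) P)) S ≤
        Measure.map (fun ω => (X n ω, Y n ω)) P S + ENNReal.ofReal rn := by
    intro S hS
    exact stmt19_twoside P (X n) (Y n) (hXm n) (hYm n) (p n) (g n) (h n) (hp n) (hg n) (hh n)
      (l n) (fun q => hl n q) hε'0 hε'1 hS
  have hcheb := stmt19_cheb P (X n) (Y n) (hXm n) (hYm n) z (ε / 2) (by linarith)
    (ENNReal.ofReal rn) hbound
  set m : ℝ := ((Measure.map (X n) P) (Iic z)).toReal with hm
  have hmc : |m - c| < ε / 2 := by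
    have := hn1
    rwa [Real.dist_eq] at this
  have hincl : {ω | ε < |((condDistrib (X n) (Y n) P (Y n ω)) (Iic z)).toReal - c|}
      ⊆ {ω | ε / 2 < |((condDistrib (X n) (Y n) P (Y n ω)) (Iic z)).toReal - m|} := by
    intro ω hω
    simp only [Set.mem_setOf_eq] at hω ⊢
    have htri : |((condDistrib (X n) (Y n) P (Y n ω)) (Iic z)).toReal - c|
        ≤ |((condDistrib (X n) (Y n) P (Y n ω)) (Iic z)).toReal - m| + |m - c| :=
      abs_sub_le _ _ _
    linarith
  have hmain : ENNReal.ofReal (ε / 2) *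
      P {ω | ε < |((condDistrib (X n) (Y n) P (Y n ω)) (Iic z)).toReal - c|}
      ≤ 2 * ENNReal.ofReal rn :=
    le_trans (mul_le_mul' le_rfl (measure_mono hincl)) hcheb
  have h2rn : 2 * ENNReal.ofReal rn ≤ ENNReal.ofReal (ε / 2) * η0 := by
    have hstep : (2:ℝ≥0∞) * ENNReal.ofReal rn = ENNReal.ofReal (rn + rn) := by
      rw [two_mul, ENNReal.ofReal_add hrnn hrnn]
    rw [hstep]
    have hre : rn + rn ≤ ε / 2 * η0.toReal := by
      have h1 : ε' ≤ ε * η0.toReal / 32 := min_le_right _ _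
      nlinarith [hQBR, hε'0.le, hη0R.le, hε.le]
    calc ENNReal.ofReal (rn + rn) ≤ ENNReal.ofReal (ε / 2 * η0.toReal) :=
          ENNReal.ofReal_le_ofReal hre
      _ = ENNReal.ofReal (ε / 2) * ENNReal.ofReal η0.toReal :=
          ENNReal.ofReal_mul (by linarith)
      _ = ENNReal.ofReal (ε / 2) * η0 := by rw [ENNReal.ofReal_toReal hη0top]
  have hfinal : P {ω | ε < |((condDistrib (X n) (Y n) P (Y n ω)) (Iic z)).toReal - c|} ≤ η0 := by
    refine (ENNReal.mul_le_mul_iff_right (a := ENNReal.ofReal (ε / 2)) ?_ ?_).mp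
      (hmain.trans h2rn)
    · simpa using ENNReal.ofReal_pos.mpr (by linarith : (0:ℝ) < ε / 2) |>.ne'
    · exact ENNReal.ofReal_ne_top
  exact hfinal.trans (min_le_left _ _)
end
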